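/- Let n ≥ 1 and let t be a full binary tree with n leaves. Then the 2^n × 2 matrix C(t), defined recursively using leaf-count ratios, satisfies C(t)|1⟩ = |W_n⟩. -/

import Mathlib

/-- A full binary tree: either a leaf or an ordered pair of full binary
trees. -/
inductive BTree where
  | leaf
  | node (t₁ t₂ : BTree)

namespace BTree

/-- Number of leaves. -/
def leaves : BTree → ℕ
  | .leaf => 1
  | .node t₁ t₂ => t₁.leaves + t₂.leaves

end BTree

/-- The `4 × 2` isometry `F_p = |00⟩⟨0| + √p |01⟩⟨1| + √(1-p) |10⟩⟨1|`,
with its output index pair `(b₁, b₂)` encoding the bitstring `b₁b₂`. -/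
noncomputable def Fp (p : ℝ) : Bool × Bool → Bool → ℂ
  | (false, false), false => 1
  | (false, true), true => ((Real.sqrt p : ℝ) : ℂ)
  | (true, false), true => ((Real.sqrt (1 - p) : ℝ) : ℂ)
  | _, _ => 0

/-- The `2^{ℓ(t)} × 2` matrix `C(t)`, built recursively using leaf-count
ratios: `C(⊥)` is the `2 × 2` identity, and
`C(t₁, t₂) = (C(t₁) ⊗ C(t₂)) · F_p` with `p = ℓ(t₂)/ℓ(t)` on a node. -/
noncomputable def Ckt : (t : BTree) → (Fin t.leaves → Bool) → Bool → ℂ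
  | .leaf => fun x i => if x ⟨0, Nat.one_pos⟩ = i then 1 else 0
  | .node t₁ t₂ => fun x i =>
      ∑ b : Bool × Bool,
        Ckt t₁ (fun j => x (Fin.castAdd t₂.leaves j)) b.1 *
        Ckt t₂ (fun j => x (Fin.natAdd t₁.leaves j)) b.2 *
        Fp ((t₂.leaves : ℝ) / ((t₁.leaves : ℝ) + (t₂.leaves : ℝ))) b i

/-- The computational basis vector of `ℂ^{2^n}` indexed by the bitstring `x`. -/
def basisState {n : ℕ} (x : Fin n → Bool) : (Fin n → Bool) → ℂ :=
  fun y => if y = x then 1 else 0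

/-- The `n`-qubit uniform W-state `|W_n⟩ = (1/√n) Σ_k |e_k⟩ ∈ ℂ^{2^n}`. -/
noncomputable def uniformW (n : ℕ) : (Fin n → Bool) → ℂ :=
  fun y => ((Real.sqrt n : ℝ) : ℂ)⁻¹ *
    ∑ k : Fin n, basisState (fun i => decide (i = k)) y

lemma BTree.leaves_pos (t : BTree) : 0 < t.leaves := by
  induction t with
  | leaf => exact Nat.one_pos
  | node t₁ t₂ ih₁ ih₂ => exact Nat.add_pos_left ih₁ _

lemma fin_one_fun_eq (x : Fin 1 → Bool) (b : Bool) :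
    (x = fun _ => b) ↔ x ⟨0, Nat.one_pos⟩ = b := by
  constructor
  · intro h; rw [h]
  · intro h; funext i; fin_cases i; exact h

lemma split_fun_eq {n m : ℕ} (x y : Fin (n + m) → Bool) :
    x = y ↔ ((fun j => x (Fin.castAdd m j)) = fun j => y (Fin.castAdd m j)) ∧
      ((fun j => x (Fin.natAdd n j)) = fun j => y (Fin.natAdd n j)) := by
  constructor
  · rintro rfl; exact ⟨rfl, rfl⟩
  · rintro ⟨h1, h2⟩
    funext i
    refine Fin.addCases (fun j => ?_) (fun j => ?_) i
    · exact congrFun h1 j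
    · exact congrFun h2 j

lemma basisState_split {n m : ℕ} (x : Fin (n + m) → Bool) (y : Fin (n + m) → Bool) :
    basisState y x = basisState (fun j => y (Fin.castAdd m j)) (fun j => x (Fin.castAdd m j)) *
      basisState (fun j => y (Fin.natAdd n j)) (fun j => x (Fin.natAdd n j)) := by
  simp only [basisState, ite_zero_mul_ite_zero, one_mul]
  exact if_congr (split_fun_eq x y) rfl rfl

lemma ckt_false (t : BTree) :
    (fun x => Ckt t x false) = basisState (fun _ => false) := by
  induction t with
  | leaf =>
    funext x
    simp only [Ckt, basisState]
    exact if_congr (Iff.symm (fin_one_fun_eq x false)) rfl rfl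
  | node t₁ t₂ ih₁ ih₂ =>
    funext x
    simp only [Ckt, Fintype.sum_prod_type, Fintype.sum_bool, Fp, mul_zero, mul_one,
      zero_add, add_zero]
    rw [congrFun ih₁ _, congrFun ih₂ _]
    exact (basisState_split x (fun _ => false)).symm

/-- For any full binary tree `t` with `n ≥ 1` leaves, the
matrix `C(t)` (built from leaf-count ratios) satisfies `C(t) |1⟩ = |W_n⟩`. -/
theorem Ckt_one_eq_uniformW (t : BTree) :
    (fun x => Ckt t x true) = uniformW t.leaves := by
  induction t with
  | leaf =>
    funext x
    simp only [Ckt, uniformW, BTree.leaves, Nat.cast_one, Real.sqrt_one,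
      Complex.ofReal_one, inv_one, one_mul]
    revert x
    show ∀ x : Fin 1 → Bool, (if x ⟨0, Nat.one_pos⟩ = true then (1:ℂ) else 0) =
      ∑ k : Fin 1, basisState (fun i => decide (i = k)) x
    intro x
    rw [Fintype.sum_subsingleton _ ⟨0, Nat.one_pos⟩]
    simp only [basisState]
    have : (x = fun i => decide (i = ⟨0, Nat.one_pos⟩)) ↔ x ⟨0, Nat.one_pos⟩ = true := by
      constructor
      · intro h; rw [h]; simp
      · intro h; funext i; fin_cases i; simpa using h
    exact if_congr (Iff.symm this) rfl rfl
  | node t₁ t₂ ih₁ ih₂ =>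
    funext x
    have h₁ : (0 : ℝ) < (t₁.leaves : ℝ) := by exact_mod_cast t₁.leaves_pos
    have h₂ : (0 : ℝ) < (t₂.leaves : ℝ) := by exact_mod_cast t₂.leaves_pos
    set n₁ := t₁.leaves
    set n₂ := t₂.leaves
    have hn : (0 : ℝ) < (n₁ : ℝ) + (n₂ : ℝ) := by linarith
    have hp1 : Real.sqrt ((n₂ : ℝ) / ((n₁ : ℝ) + (n₂ : ℝ))) =
        Real.sqrt n₂ / Real.sqrt ((n₁ : ℝ) + (n₂ : ℝ)) := Real.sqrt_div h₂.le _
    have hp2 : Real.sqrt (1 - (n₂ : ℝ) / ((n₁ : ℝ) + (n₂ : ℝ))) =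
        Real.sqrt n₁ / Real.sqrt ((n₁ : ℝ) + (n₂ : ℝ)) := by
      rw [show 1 - (n₂ : ℝ) / ((n₁ : ℝ) + (n₂ : ℝ)) = (n₁ : ℝ) / ((n₁ : ℝ) + (n₂ : ℝ)) by
        field_simp; ring]
      exact Real.sqrt_div h₁.le _
    simp only [Ckt, Fintype.sum_prod_type, Fintype.sum_bool, Fp, mul_zero, mul_one,
      zero_add, add_zero]
    rw [congrFun (ckt_false t₁) _, congrFun (ckt_false t₂) _, congrFun ih₁ _, congrFun ih₂ _]
    simp only [uniformW, BTree.leaves]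
    rw [show ((n₁ + n₂ : ℕ) : ℝ) = (n₁ : ℝ) + (n₂ : ℝ) by push_cast; ring]
    erw [Fin.sum_univ_add]
    have hterm₁ : ∀ k₁ : Fin n₁,
        basisState (fun i => decide (i = Fin.castAdd n₂ k₁)) x =
        basisState (fun i => decide (i = k₁)) (fun j => x (Fin.castAdd n₂ j)) *
          basisState (fun _ => false) (fun j => x (Fin.natAdd n₁ j)) := by
      intro k₁
      rw [basisState_split x]
      congr 1
      · congr 1; funext j
        simp [Fin.ext_iff]
      · congr 1; funext j
        simp only [Fin.ext_iff, Fin.coe_natAdd, Fin.coe_castAdd]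
        have := j.isLt; have := k₁.isLt
        simp only [decide_eq_false_iff_not]
        omega
    have hterm₂ : ∀ k₂ : Fin n₂,
        basisState (fun i => decide (i = Fin.natAdd n₁ k₂)) x =
        basisState (fun _ => false) (fun j => x (Fin.castAdd n₂ j)) *
          basisState (fun i => decide (i = k₂)) (fun j => x (Fin.natAdd n₁ j)) := by
      intro k₂
      rw [basisState_split x]
      congr 1
      · congr 1; funext j
        simp only [Fin.ext_iff, Fin.coe_natAdd, Fin.coe_castAdd]
        have := j.isLt; have := k₂.isLt
        simp only [decide_eq_false_iff_not]
        omega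
      · congr 1; funext j
        simp [Fin.ext_iff]
        exact Nat.add_left_cancel_iff
    erw [Finset.sum_congr rfl (fun k₁ _ => hterm₁ k₁),
        Finset.sum_congr rfl (fun k₂ _ => hterm₂ k₂),
        ← Finset.sum_mul, ← Finset.mul_sum]
    rw [hp1, hp2]
    push_cast
    have s1 : (Real.sqrt (n₁ : ℝ) : ℂ) ≠ 0 := by
      simpa using (Real.sqrt_pos.mpr h₁).ne'
    have s2 : (Real.sqrt (n₂ : ℝ) : ℂ) ≠ 0 := by
      simpa using (Real.sqrt_pos.mpr h₂).ne'
    have sn : (Real.sqrt ((n₁ : ℝ) + (n₂ : ℝ)) : ℂ) ≠ 0 := by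
      simpa using (Real.sqrt_pos.mpr hn).ne'
    field_simp
    rw [mul_div_assoc, mul_div_assoc, div_self s1, div_self s2, mul_one, mul_one]
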